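/- Let λ be a cardinal of countable cofinality, 𝒟 a strong covering matrix on λ⁺, θ sufficiently large, and M ≺ H_θ an ℵ₁-internally unbounded model of size ℵ₁ with 𝒟 ∈ M. Then there is n < ω such that D(m, sup(M ∩ λ⁺)) ∩ x ∈ M for all x ∈ P_{ω₁}(λ⁺) ∩ M and all m ≥ n. -/

import Mathlib

open Cardinal

namespace GuessingModels

/-- First-order formulas in the language of set theory (membership and equality),
with `n` free variables. -/
inductive SF : ℕ → Type
  | mem {n} (i j : Fin n) : SF n
  | eq {n} (i j : Fin n) : SF n
  | imp {n} (f g : SF n) : SF n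
  | not {n} (f : SF n) : SF n
  | ex {n} (f : SF (n + 1)) : SF n

/-- Tarskian satisfaction of a set-theoretic formula in the structure `⟨S, ∈⟩`,
where `S` is a class of ZF sets. -/
def Realize (S : Set ZFSet) : ∀ {n}, SF n → (Fin n → ZFSet) → Prop
  | _, .mem i j, v => v i ∈ v j
  | _, .eq i j, v => v i = v j
  | _, .imp f g, v => Realize S f v → Realize S g v
  | _, .not f, v => ¬ Realize S f v
  | _, .ex f, v => ∃ x ∈ S, Realize S f (Fin.cons x v)

/-- `M ≺ R` : `M` is an elementary substructure of `⟨R, ∈⟩`. -/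
def Prec (M R : Set ZFSet) : Prop :=
  M ⊆ R ∧ ∀ {n : ℕ} (φ : SF n) (v : Fin n → ZFSet), (∀ i, v i ∈ M) →
    (Realize M φ v ↔ Realize R φ v)

/-- A (von Neumann) ordinal: a transitive set of transitive sets. -/
def IsOrd (x : ZFSet) : Prop :=
  x.IsTransitive ∧ ∀ y ∈ x, ZFSet.IsTransitive y

/-- `≤` on ordinals, i.e. `∈` or `=`. -/
def ole (a b : ZFSet) : Prop := a ∈ b ∨ a = b

/-- The cardinality of (the extension of) a ZF set. -/
noncomputable def card (x : ZFSet) : Cardinal := Cardinal.mk x.toSet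

/-- A ZF set which is a cardinal: an ordinal not equinumerous with any of its members. -/
def IsCard (κ : ZFSet) : Prop := IsOrd κ ∧ ∀ β ∈ κ, card β < card κ

/-- `s` (an external class) is a cofinal subset of the ordinal `κ`. -/
def CofinalSetIn (s : Set ZFSet) (κ : ZFSet) : Prop :=
  (∀ x ∈ s, x ∈ κ) ∧ ∀ β ∈ κ, ∃ γ ∈ s, ole β γ

/-- A regular cardinal: an infinite cardinal all of whose cofinal subsets have full size. -/
def IsRegCard (κ : ZFSet) : Prop :=
  IsCard κ ∧ ZFSet.omega ⊆ κ ∧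
    ∀ s : Set ZFSet, CofinalSetIn s κ → Cardinal.mk s = card κ

/-- A strong limit ZF cardinal. -/
def IsStrongLimit (κ : ZFSet) : Prop := ∀ β ∈ κ, (2 : Cardinal) ^ card β < card κ

/-- A strongly inaccessible cardinal: regular, uncountable and strong limit. -/
def IsInacc (κ : ZFSet) : Prop := IsRegCard κ ∧ ZFSet.omega ∈ κ ∧ IsStrongLimit κ

/-- The transitive closure of a ZF set, as a class. -/
def tcl (x : ZFSet) : Set ZFSet := {y | Relation.TransGen (· ∈ ·) y x}

/-- `H_θ` : the class of sets hereditarily of size `< θ`. -/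
noncomputable def HSet (θ : ZFSet) : Set ZFSet := {x | Cardinal.mk (tcl x) < card θ}

/-- `V_α` as a class, for `α` an ordinal (as a ZF set): sets of rank `< α`. -/
noncomputable def VSet (α : ZFSet) : Set ZFSet := {x | x.rank < α.rank}

/-- A suitable initial segment: `H_θ` for a regular cardinal `θ`, or a rank initial
segment `V_α`. -/
def Suitable (R : Set ZFSet) : Prop :=
  (∃ θ : ZFSet, IsRegCard θ ∧ R = HSet θ) ∨ (∃ α : ZFSet, IsOrd α ∧ R = VSet α)

/-- `κ = κ_M` : `κ` is the least ordinal in `M` with `M ∩ κ ≠ κ`. -/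
def KappaSpec (M : Set ZFSet) (κ : ZFSet) : Prop :=
  IsOrd κ ∧ κ ∈ M ∧ (∃ β ∈ κ, β ∉ M) ∧
    ∀ α : ZFSet, IsOrd α → α ∈ M → (∃ β ∈ α, β ∉ M) → ole κ α

/-- `d` is `(δ, M)`-approximated: `d ∩ Z ∈ M` for every `Z ∈ M` of size `< δ`. -/
noncomputable def Approx (M : Set ZFSet) (δ : Cardinal.{1}) (d : ZFSet) : Prop :=
  ∀ Z : ZFSet, Z ∈ M → card Z < δ → (d ∩ Z) ∈ M

/-- `d ⊆ X` is `M`-guessed: `d ∩ M = e ∩ M` for some `e ∈ M ∩ P(X)`. -/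
def Guessed (M : Set ZFSet) (X d : ZFSet) : Prop :=
  ∃ e : ZFSet, e ∈ M ∧ e ⊆ X ∧ ∀ z ∈ M, (z ∈ e ↔ z ∈ d)

/-- `M` is a `δ`-guessing model: every `(δ,M)`-approximated subset of any `X ∈ M`
is `M`-guessed. -/
noncomputable def GuessingModel (M : Set ZFSet) (δ : Cardinal.{1}) : Prop :=
  ∀ X ∈ M, ∀ d : ZFSet, d ⊆ X → Approx M δ d → Guessed M X d

/-- `M` is `ℵ₁`-internally unbounded: every countable subset of `M` is contained
in a countable element of `M`. -/
noncomputable def IntUnb (M : Set ZFSet) : Prop :=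
  ∀ A : Set ZFSet, A ⊆ M → A.Countable → ∃ z ∈ M, card z ≤ ℵ₀ ∧ A ⊆ z.toSet

/-- The `n`-th von Neumann natural number as a ZF set. -/
def natZF : ℕ → ZFSet
  | 0 => ∅
  | n + 1 => insert (natZF n) (natZF n)

/-- Definition 7.5: a strong covering matrix on `λ⁺` (here `lamp`). -/
noncomputable def SCM (lam lamp : ZFSet) (D : ℕ → ZFSet → ZFSet) : Prop :=
  (∀ α, α ∈ lamp → (∀ n : ℕ, D n α ⊆ α) ∧ ∀ β ∈ α, ∃ n : ℕ, β ∈ D n α) ∧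
  (∀ α, α ∈ lamp → ∀ m n : ℕ, m ≤ n → D m α ⊆ D n α) ∧
  (∀ α, α ∈ lamp → ∀ α', α' ∈ lamp → α ∈ α' →
    ∃ n : ℕ, ∀ m : ℕ, n ≤ m → D m α ⊆ D m α') ∧
  (∀ x : ZFSet, x ⊆ lamp → card x ≤ ℵ₀ →
    ∃ γ, γ ∈ lamp ∧ ∀ α, α ∈ lamp → ole γ α →
      ∃ n : ℕ, ∀ m : ℕ, n ≤ m → D m α ∩ x = D m γ ∩ x) ∧
  (∀ α, α ∈ lamp → ∀ n : ℕ, card (D n α) < card lam)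



section Aux
set_option maxHeartbeats 1000000
set_option linter.unusedSectionVars false

theorem mem_natZF {x : ZFSet} {n : ℕ} : x ∈ natZF n ↔ ∃ m, m < n ∧ x = natZF m := by
  induction n with
  | zero => simp [natZF]
  | succ k ih =>
    simp only [natZF, ZFSet.mem_insert_iff, ih]
    constructor
    · rintro (rfl | ⟨m, hm, rfl⟩)
      · exact ⟨k, by omega, rfl⟩
      · exact ⟨m, by omega, rfl⟩
    · rintro ⟨m, hm, rfl⟩
      rcases Nat.lt_succ_iff_lt_or_eq.1 hm with h | rfl
      · exact Or.inr ⟨m, h, rfl⟩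
      · exact Or.inl rfl

theorem natZF_mem_of_lt {m n : ℕ} (h : m < n) : natZF m ∈ natZF n := by
  induction n with
  | zero => omega
  | succ k ih =>
    rcases Nat.lt_succ_iff_lt_or_eq.1 h with h | rfl
    · exact ZFSet.mem_insert_of_mem _ (ih h)
    · exact ZFSet.mem_insert _ _

theorem natZF_injective : Function.Injective natZF := by
  intro m n h
  by_contra hne
  rcases Nat.lt_or_ge m n with hl | hg
  · exact ZFSet.mem_irrefl _ (h ▸ natZF_mem_of_lt hl)
  · have : n < m := by omega
    exact ZFSet.mem_irrefl _ (h ▸ natZF_mem_of_lt this)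

theorem natZF_mem_iff {m n : ℕ} : natZF m ∈ natZF n ↔ m < n := by
  refine ⟨fun h => ?_, natZF_mem_of_lt⟩
  rcases mem_natZF.1 h with ⟨k, hk, he⟩
  rwa [natZF_injective he]

theorem natZF_le_iff {m n : ℕ} : (natZF m ∈ natZF n ∨ natZF m = natZF n) ↔ m ≤ n := by
  rw [natZF_mem_iff]
  constructor
  · rintro (h | h)
    · omega
    · exact (natZF_injective h).le
  · intro h
    rcases Nat.lt_or_ge m n with h' | h'
    · exact Or.inl h'
    · exact Or.inr (congrArg natZF (by omega))

theorem natZF_mem_omega (n : ℕ) : natZF n ∈ ZFSet.omega := by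
  induction n with
  | zero => exact ZFSet.omega_zero
  | succ k ih => exact ZFSet.omega_succ ih

theorem mem_omega_iff {y : ZFSet} : y ∈ ZFSet.omega ↔ ∃ n, y = natZF n := by
  constructor
  · intro h
    induction y using Quotient.inductionOn with
    | h p =>
      rcases h with ⟨⟨n⟩, hn⟩
      refine ⟨n, ?_⟩
      have : (⟦p⟧ : ZFSet) = ZFSet.mk (PSet.ofNat n) := Quotient.sound hn
      rw [this]
      clear hn this
      induction n with
      | zero => rfl
      | succ k ih => show ZFSet.mk (PSet.insert _ _) = _; rw [natZF, ← ih]; rfl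
  · rintro ⟨n, rfl⟩; exact natZF_mem_omega n

-- tcl lemmas
theorem mem_tcl_of_mem {x y : ZFSet} (h : y ∈ x) : y ∈ tcl x := Relation.TransGen.single h

theorem tcl_closed {x u z : ZFSet} (hu : u ∈ tcl x) (hz : z ∈ u) : z ∈ tcl x :=
  Relation.TransGen.head hz hu

theorem tcl_subset_of {x : ZFSet} {S : Set ZFSet} (h1 : ∀ y ∈ x, y ∈ S)
    (h2 : ∀ u ∈ S, ∀ z ∈ u, z ∈ S) : tcl x ⊆ S := by
  intro z hz
  induction hz using Relation.TransGen.head_induction_on with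
  | single h => exact h1 _ h
  | head h _ ih => exact h2 _ ih _ h

theorem tcl_mono_mem {x y : ZFSet} (h : y ∈ x) : tcl y ⊆ tcl x :=
  fun _ hz => hz.tail h

theorem tcl_mono_subset {x y : ZFSet} (h : y ⊆ x) : tcl y ⊆ tcl x := by
  intro z hz
  cases hz with
  | single h' => exact Relation.TransGen.single (h h')
  | tail h₁ h₂ => exact h₁.tail (h h₂)

theorem self_mem_tcl_of_mem {x y : ZFSet} (h : y ∈ x) : y ∈ tcl x := Relation.TransGen.single h


theorem HSet_trans {θ x y : ZFSet} (hx : x ∈ HSet θ) (hy : y ∈ x) : y ∈ HSet θ :=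
  lt_of_le_of_lt (Cardinal.mk_le_mk_of_subset (tcl_mono_mem hy)) hx

theorem HSet_subset {θ x y : ZFSet} (hx : x ∈ HSet θ) (hy : y ⊆ x) : y ∈ HSet θ :=
  lt_of_le_of_lt (Cardinal.mk_le_mk_of_subset (tcl_mono_subset hy)) hx

theorem HSet_empty {θ : ZFSet} (h : ℵ₀ ≤ card θ) : (∅ : ZFSet) ∈ HSet θ := by
  have : tcl (∅ : ZFSet) ⊆ (∅ : Set ZFSet) :=
    tcl_subset_of (fun y hy => absurd hy (ZFSet.notMem_empty y)) (fun u hu => absurd hu (by simp))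
  refine lt_of_le_of_lt (Cardinal.mk_le_mk_of_subset this) ?_
  simp only [Cardinal.mk_emptyCollection]
  exact lt_of_lt_of_le Cardinal.aleph0_pos h

theorem HSet_insert {θ a b : ZFSet} (h : ℵ₀ ≤ card θ) (ha : a ∈ HSet θ) (hb : b ∈ HSet θ) :
    insert a b ∈ HSet θ := by
  have hsub : tcl (insert a b) ⊆ {a} ∪ (tcl a ∪ tcl b) := by
    refine tcl_subset_of (fun y hy => ?_) (fun u hu z hz => ?_)
    · rcases ZFSet.mem_insert_iff.1 hy with rfl | hy
      · exact Or.inl rfl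
      · exact Or.inr (Or.inr (Relation.TransGen.single hy))
    · rcases hu with rfl | hu | hu
      · exact Or.inr (Or.inl (Relation.TransGen.single hz))
      · exact Or.inr (Or.inl (Relation.TransGen.head hz hu))
      · exact Or.inr (Or.inr (Relation.TransGen.head hz hu))
  refine lt_of_le_of_lt (Cardinal.mk_le_mk_of_subset hsub) ?_
  refine lt_of_le_of_lt (Cardinal.mk_union_le _ _) ?_
  refine Cardinal.add_lt_of_lt h ?_ ?_
  · simp only [Cardinal.mk_singleton]
    exact lt_of_lt_of_le Cardinal.one_lt_aleph0 h
  · exact lt_of_le_of_lt (Cardinal.mk_union_le _ _) (Cardinal.add_lt_of_lt h ha hb)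

theorem HSet_pair {θ a b : ZFSet} (h : ℵ₀ ≤ card θ) (ha : a ∈ HSet θ) (hb : b ∈ HSet θ) :
    ZFSet.pair a b ∈ HSet θ := by
  have he := HSet_empty h
  show ({{a}, {a, b}} : ZFSet) ∈ HSet θ
  exact HSet_insert h (HSet_insert h ha he)
    (HSet_insert h (HSet_insert h ha (HSet_insert h hb he)) he)

theorem HSet_omega {θ : ZFSet} (h : ℵ₀ < card θ) : ZFSet.omega ∈ HSet θ := by
  have hsub : tcl ZFSet.omega ⊆ ZFSet.omega.toSet := by
    refine tcl_subset_of (fun y hy => hy) (fun u hu z hz => ?_)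
    rcases mem_omega_iff.1 hu with ⟨n, rfl⟩
    rcases mem_natZF.1 hz with ⟨m, _, rfl⟩
    exact mem_omega_iff.2 ⟨m, rfl⟩
  refine lt_of_le_of_lt (Cardinal.mk_le_mk_of_subset hsub) (lt_of_le_of_lt ?_ h)
  have : ZFSet.omega.toSet ⊆ Set.range natZF := by
    intro y hy; rcases mem_omega_iff.1 hy with ⟨n, rfl⟩; exact ⟨n, rfl⟩
  exact le_trans (Cardinal.mk_le_mk_of_subset this) (Set.countable_range natZF).le_aleph0

theorem aleph0_le_mk_of_natZF {s : Set ZFSet} (h : ∀ n, natZF n ∈ s) : ℵ₀ ≤ Cardinal.mk s := by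
  rw [Cardinal.aleph0_le_mk_iff]
  refine Infinite.of_injective (fun n => (⟨natZF n, h n⟩ : s)) ?_
  intro m n hmn
  exact natZF_injective (congrArg Subtype.val hmn)

def SF.and {n} (f g : SF n) : SF n := .not (.imp f (.not g))
def SF.or {n} (f g : SF n) : SF n := .imp (.not f) g
def SF.all {n} (f : SF (n + 1)) : SF n := .not (.ex (.not f))
theorem realize_mem {S} {n} {i j : Fin n} {v} : Realize S (.mem i j) v ↔ v i ∈ v j := Iff.rfl
theorem realize_eq {S} {n} {i j : Fin n} {v} : Realize S (.eq i j) v ↔ v i = v j := Iff.rfl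
theorem realize_imp {S} {n} {f g : SF n} {v} :
    Realize S (f.imp g) v ↔ (Realize S f v → Realize S g v) := Iff.rfl
theorem realize_not {S} {n} {f : SF n} {v} : Realize S (f.not) v ↔ ¬ Realize S f v := Iff.rfl
theorem realize_ex {S} {n} {f : SF (n+1)} {v} :
    Realize S (.ex f) v ↔ ∃ x ∈ S, Realize S f (Fin.cons x v) := Iff.rfl
theorem realize_and {S} {n} {f g : SF n} {v} :
    Realize S (f.and g) v ↔ (Realize S f v ∧ Realize S g v) := by
  show ¬(Realize S f v → ¬ Realize S g v) ↔ _; tauto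
theorem realize_or {S} {n} {f g : SF n} {v} :
    Realize S (f.or g) v ↔ (Realize S f v ∨ Realize S g v) := by
  show (¬ Realize S f v → Realize S g v) ↔ _; tauto
theorem realize_all {S} {n} {f : SF (n+1)} {v} :
    Realize S (SF.all f) v ↔ ∀ x ∈ S, Realize S f (Fin.cons x v) := by
  show ¬(∃ x ∈ S, ¬ Realize S f (Fin.cons x v)) ↔ _
  push_neg; rfl
def fUpair {n} (t a b : Fin n) : SF n :=
  (SF.mem a t).and ((SF.mem b t).and
    (SF.all ((SF.mem 0 t.succ).imp ((SF.eq 0 a.succ).or (SF.eq 0 b.succ)))))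
theorem realize_fUpair_raw {S} {n} {t a b : Fin n} {v} :
    Realize S (fUpair t a b) v ↔
      (v a ∈ v t ∧ v b ∈ v t ∧ ∀ u ∈ S, u ∈ v t → u = v a ∨ u = v b) := by
  simp only [fUpair, realize_and, realize_mem, realize_all, realize_imp, realize_or, realize_eq]
  exact Iff.rfl

section PairLemmas
variable {H : Set ZFSet} (Htr : ∀ x ∈ H, ∀ y ∈ x, y ∈ H)
include Htr

theorem realize_fUpair {n} {t a b : Fin n} {v} (ht : v t ∈ H) :
    Realize H (fUpair t a b) v ↔ v t = ({v a, v b} : ZFSet) := by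
  rw [realize_fUpair_raw]
  constructor
  · rintro ⟨h1, h2, h3⟩
    apply ZFSet.ext; intro z
    rw [ZFSet.mem_pair]
    refine ⟨fun hz => h3 z (Htr _ ht _ hz) hz, ?_⟩
    rintro (rfl | rfl) <;> assumption
  · intro h
    rw [h]
    exact ⟨ZFSet.mem_pair.2 (Or.inl rfl), ZFSet.mem_pair.2 (Or.inr rfl),
      fun u _ hu => ZFSet.mem_pair.1 hu⟩

/-- `v p = ⟨v A, v d⟩` (Kuratowski). -/
def fPairEq {n} (p A d : Fin n) : SF n :=
  .ex (.ex ((fUpair (Fin.succ 0) A.succ.succ A.succ.succ).and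
    ((fUpair 0 A.succ.succ d.succ.succ).and (fUpair p.succ.succ (Fin.succ 0) 0))))

theorem realize_fPairEq {n} {p A d : Fin n} {v} (hp : v p ∈ H) :
    Realize H (fPairEq p A d) v ↔ v p = ZFSet.pair (v A) (v d) := by
  constructor
  · rintro ⟨s, hs, t, ht, h⟩
    rw [realize_and, realize_and] at h
    obtain ⟨h1, h2, h3⟩ := h
    have hs' : s = ({v A} : ZFSet) := by
      have := (realize_fUpair (v := Fin.cons t (Fin.cons s v)) (t := Fin.succ 0) Htr hs).1 h1
      rw [show s = ({v A, v A} : ZFSet) from this]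
      exact ZFSet.pair_eq_singleton _
    have ht' : t = ({v A, v d} : ZFSet) :=
      (realize_fUpair (v := Fin.cons t (Fin.cons s v)) (t := (0 : Fin (n+2))) Htr ht).1 h2
    have hp' : v p = ({s, t} : ZFSet) :=
      (realize_fUpair (v := Fin.cons t (Fin.cons s v)) (t := p.succ.succ) Htr hp).1 h3
    rw [hs', ht'] at hp'
    exact hp'
  · intro h
    have hmem1 : ({v A} : ZFSet) ∈ v p := by rw [h]; exact ZFSet.mem_pair.2 (Or.inl rfl)
    have hmem2 : ({v A, v d} : ZFSet) ∈ v p := by rw [h]; exact ZFSet.mem_pair.2 (Or.inr rfl)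
    refine ⟨{v A}, Htr _ hp _ hmem1, {v A, v d}, Htr _ hp _ hmem2, ?_⟩
    rw [realize_and, realize_and]
    refine ⟨?_, ?_, ?_⟩
    · exact (realize_fUpair (v := Fin.cons {v A, v d} (Fin.cons {v A} v))
        (t := Fin.succ 0) Htr (Htr _ hp _ hmem1)).2 (ZFSet.pair_eq_singleton (v A)).symm
    · exact (realize_fUpair (v := Fin.cons {v A, v d} (Fin.cons {v A} v))
        (t := (0 : Fin (n+2))) Htr (Htr _ hp _ hmem2)).2 rfl
    · exact (realize_fUpair (v := Fin.cons {v A, v d} (Fin.cons {v A} v))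
        (t := p.succ.succ) Htr hp).2 h

/-- `v p = ⟨⟨v a, v b⟩, v d⟩`. -/
def fPairEq2 {n} (p a b d : Fin n) : SF n :=
  .ex ((fPairEq 0 a.succ b.succ).and (fPairEq p.succ 0 d.succ))

theorem realize_fPairEq2 {n} {p a b d : Fin n} {v} (hp : v p ∈ H) :
    Realize H (fPairEq2 p a b d) v ↔
      v p = ZFSet.pair (ZFSet.pair (v a) (v b)) (v d) := by
  constructor
  · rintro ⟨A, hA, h⟩
    rw [realize_and] at h
    obtain ⟨h1, h2⟩ := h
    have h1' : A = ZFSet.pair (v a) (v b) :=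
      (realize_fPairEq (v := Fin.cons A v) (p := (0 : Fin (n+1))) Htr hA).1 h1
    have h2' : v p = ZFSet.pair A (v d) :=
      (realize_fPairEq (v := Fin.cons A v) (p := p.succ) Htr hp).1 h2
    rw [h1'] at h2'; exact h2'
  · intro h
    have hA : ZFSet.pair (v a) (v b) ∈ H := by
      have h1 : ({ZFSet.pair (v a) (v b)} : ZFSet) ∈ v p := by
        rw [h]; exact ZFSet.mem_pair.2 (Or.inl rfl)
      exact Htr _ (Htr _ hp _ h1) _ (ZFSet.mem_singleton.2 rfl)
    refine ⟨ZFSet.pair (v a) (v b), hA, ?_⟩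
    rw [realize_and]
    constructor
    · exact (realize_fPairEq (v := Fin.cons (ZFSet.pair (v a) (v b)) v)
        (p := (0 : Fin (n+1))) Htr hA).2 rfl
    · exact (realize_fPairEq (v := Fin.cons (ZFSet.pair (v a) (v b)) v)
        (p := p.succ) Htr hp).2 h

/-- `⟨v a, v d⟩ ∈ v F`. -/
def fMemPair {n} (F a d : Fin n) : SF n :=
  .ex ((SF.mem 0 F.succ).and (fPairEq 0 a.succ d.succ))

theorem realize_fMemPair {n} {F a d : Fin n} {v} (hF : v F ∈ H) :
    Realize H (fMemPair F a d) v ↔ ZFSet.pair (v a) (v d) ∈ v F := by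
  constructor
  · rintro ⟨p, hp, h⟩
    rw [realize_and] at h
    obtain ⟨h1, h2⟩ := h
    have h1' : p ∈ v F := h1
    have h2' : p = ZFSet.pair (v a) (v d) :=
      (realize_fPairEq (v := Fin.cons p v) (p := (0 : Fin (n+1))) Htr hp).1 h2
    rwa [h2'] at h1'
  · intro h
    refine ⟨ZFSet.pair (v a) (v d), Htr _ hF _ h, ?_⟩
    rw [realize_and]
    exact ⟨h, (realize_fPairEq (v := Fin.cons (ZFSet.pair (v a) (v d)) v)
      (p := (0 : Fin (n+1))) Htr (Htr _ hF _ h)).2 rfl⟩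

/-- `⟨⟨v a, v b⟩, v d⟩ ∈ v F`. -/
def fMemPair2 {n} (F a b d : Fin n) : SF n :=
  .ex ((SF.mem 0 F.succ).and (fPairEq2 0 a.succ b.succ d.succ))

theorem realize_fMemPair2 {n} {F a b d : Fin n} {v} (hF : v F ∈ H) :
    Realize H (fMemPair2 F a b d) v ↔
      ZFSet.pair (ZFSet.pair (v a) (v b)) (v d) ∈ v F := by
  have base : Realize H (fMemPair2 F a b d) v ↔
      ∃ p ∈ H, p ∈ v F ∧ Realize H (fPairEq2 0 a.succ b.succ d.succ) (Fin.cons p v) := by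
    simp only [fMemPair2, realize_ex, realize_and]
    exact Iff.rfl
  rw [base]
  constructor
  · rintro ⟨p, hp, h1', h2⟩
    have h2' : p = ZFSet.pair (ZFSet.pair (v a) (v b)) (v d) :=
      (realize_fPairEq2 (v := Fin.cons p v) (p := (0 : Fin (n+1))) Htr hp).1 h2
    rwa [h2'] at h1'
  · intro h
    refine ⟨_, Htr _ hF _ h, h, ?_⟩
    exact (realize_fPairEq2 (v := Fin.cons (ZFSet.pair (ZFSet.pair (v a) (v b)) (v d)) v)
      (p := (0 : Fin (n+1))) Htr (Htr _ hF _ h)).2 rfl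

/-- `v d ∩ v x = v d' ∩ v x`. -/
def fIntEq {n} (d d' x : Fin n) : SF n :=
  (SF.all ((SF.mem 0 d.succ).imp ((SF.mem 0 x.succ).imp (SF.mem 0 d'.succ)))).and
    (SF.all ((SF.mem 0 d'.succ).imp ((SF.mem 0 x.succ).imp (SF.mem 0 d.succ))))

theorem realize_fIntEq {n} {d d' x : Fin n} {v} (hd : v d ∈ H) (hd' : v d' ∈ H) :
    Realize H (fIntEq d d' x) v ↔ v d ∩ v x = v d' ∩ v x := by
  rw [fIntEq, realize_and]
  have e1 : Realize H (SF.all ((SF.mem 0 d.succ).imp ((SF.mem 0 x.succ).imp (SF.mem 0 d'.succ)))) v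
      ↔ ∀ t ∈ H, t ∈ v d → t ∈ v x → t ∈ v d' := by
    simp only [realize_all, realize_imp, realize_mem]; exact Iff.rfl
  have e2 : Realize H (SF.all ((SF.mem 0 d'.succ).imp ((SF.mem 0 x.succ).imp (SF.mem 0 d.succ)))) v
      ↔ ∀ t ∈ H, t ∈ v d' → t ∈ v x → t ∈ v d := by
    simp only [realize_all, realize_imp, realize_mem]; exact Iff.rfl
  rw [e1, e2]
  constructor
  · rintro ⟨h1, h2⟩
    apply ZFSet.ext; intro z
    simp only [ZFSet.mem_inter]
    exact ⟨fun ⟨hz1, hz2⟩ => ⟨h1 z (Htr _ hd _ hz1) hz1 hz2, hz2⟩,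
      fun ⟨hz1, hz2⟩ => ⟨h2 z (Htr _ hd' _ hz1) hz1 hz2, hz2⟩⟩
  · intro h
    constructor
    · intro t _ h1 h2
      have : t ∈ v d ∩ v x := ZFSet.mem_inter.2 ⟨h1, h2⟩
      rw [h] at this; exact (ZFSet.mem_inter.1 this).1
    · intro t _ h1 h2
      have : t ∈ v d' ∩ v x := ZFSet.mem_inter.2 ⟨h1, h2⟩
      rw [← h] at this; exact (ZFSet.mem_inter.1 this).1

/-- `∃ c, v u = {c}` : `v u` is a singleton. -/
def fSing {n} (u : Fin n) : SF n :=
  .ex ((SF.mem 0 u.succ).and (SF.all ((SF.mem 0 u.succ.succ).imp (SF.eq 0 (Fin.succ 0)))))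

theorem realize_fSing {n} {u : Fin n} {v} (hu : v u ∈ H) :
    Realize H (fSing u) v ↔ ∃ c, v u = ({c} : ZFSet) := by
  constructor
  · rintro ⟨c, hc, h⟩
    rw [realize_and] at h
    obtain ⟨h1, h2⟩ := h
    have h1' : c ∈ v u := h1
    have h2' : ∀ b ∈ H, b ∈ v u → b = c := by
      intro b hb hbu
      have := (realize_all.1 h2) b hb
      rw [realize_imp, realize_eq] at this
      exact this hbu
    refine ⟨c, ZFSet.ext fun z => ?_⟩
    rw [ZFSet.mem_singleton]
    exact ⟨fun hz => h2' z (Htr _ hu _ hz) hz, fun hz => hz ▸ h1'⟩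
  · rintro ⟨c, hc⟩
    have hcH : c ∈ H := Htr _ hu _ (hc ▸ ZFSet.mem_singleton.2 rfl)
    refine ⟨c, hcH, ?_⟩
    rw [realize_and]
    refine ⟨show c ∈ v u from hc ▸ ZFSet.mem_singleton.2 rfl, ?_⟩
    rw [realize_all]
    intro b _
    rw [realize_imp, realize_eq]
    intro hb
    have : b ∈ v u := hb
    rw [hc] at this
    exact ZFSet.mem_singleton.1 this

end PairLemmas

-- ===== concrete formulas =====

/-- `∃ z, z = ∅`. -/
def fEmptySet : SF 0 := .ex (SF.all ((SF.mem 0 1).not))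

/-- `∃ z, z = insert (v 0) (v 0)`. -/
def fSucc : SF 1 := .ex ((SF.mem 1 0).and
  ((SF.all ((SF.mem 0 1).imp ((SF.mem 0 2).or (SF.eq 0 2)))).and
   (SF.all ((SF.mem 0 2).imp (SF.mem 0 1)))))

/-- `∃ e, e = v 0 ∩ v 1`. -/
def fInterF : SF 2 := .ex ((SF.all ((SF.mem 0 1).imp ((SF.mem 0 2).and (SF.mem 0 3)))).and
  (SF.all ((SF.mem 0 2).imp ((SF.mem 0 3).imp (SF.mem 0 1)))))

/-- `∃ d, ⟨⟨v 0, v 1⟩, d⟩ ∈ v 2`. -/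
def fGetD : SF 3 := .ex (fMemPair2 3 1 2 0)

/-- `∃ t, ⟨v 1, t⟩ ∈ v 0`. -/
def fVal : SF 2 := .ex (fMemPair 1 2 0)

/-- `v 0` is ω. -/
def fIsOmega : SF 1 :=
  (SF.all ((SF.mem 0 1).imp (SF.all ((SF.mem 0 1).imp (SF.mem 0 2))))).and
  ((SF.ex ((SF.mem 0 1).and (SF.all ((SF.mem 0 1).not)))).and
  ((SF.all ((SF.mem 0 1).imp (SF.ex ((SF.mem 0 2).and ((SF.mem 1 0).and
      ((SF.all ((SF.mem 0 1).imp ((SF.mem 0 2).or (SF.eq 0 2)))).and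
       (SF.all ((SF.mem 0 2).imp (SF.mem 0 1))))))))).and
   (SF.all ((SF.mem 0 1).imp ((SF.all ((SF.mem 0 1).not)).or
     (SF.ex ((SF.mem 0 1).and ((SF.all ((SF.mem 0 2).imp ((SF.mem 0 1).or (SF.eq 0 1)))).and
        (SF.all ((SF.mem 0 1).imp (SF.mem 0 2)))))))))))

theorem realize_fIsOmega {H : Set ZFSet} {w : ZFSet} :
    Realize H fIsOmega ![w] ↔
      ((∀ u ∈ H, u ∈ w → ∀ z ∈ H, z ∈ u → z ∈ w) ∧
       (∃ z ∈ H, z ∈ w ∧ ∀ u ∈ H, ¬ u ∈ z) ∧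
       (∀ y ∈ H, y ∈ w → ∃ z ∈ H, z ∈ w ∧ y ∈ z ∧
          (∀ u ∈ H, u ∈ z → u ∈ y ∨ u = y) ∧ (∀ u ∈ H, u ∈ y → u ∈ z)) ∧
       (∀ y ∈ H, y ∈ w → (∀ u ∈ H, ¬ u ∈ y) ∨
          ∃ z ∈ H, z ∈ y ∧ (∀ u ∈ H, u ∈ y → u ∈ z ∨ u = z) ∧ (∀ u ∈ H, u ∈ z → u ∈ y))) := by
  simp only [fIsOmega, realize_and, realize_all, realize_imp, realize_or, realize_eq,
    realize_mem, realize_ex, realize_not]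
  exact Iff.rfl

theorem realize_fIsOmega_omega {H : Set ZFSet} (Htr : ∀ x ∈ H, ∀ y ∈ x, y ∈ H)
    (hom : ZFSet.omega ∈ H) (hemp : (∅ : ZFSet) ∈ H)
    (hins : ∀ a ∈ H, insert a a ∈ H) :
    Realize H fIsOmega ![ZFSet.omega] := by
  rw [realize_fIsOmega]
  refine ⟨?_, ⟨∅, hemp, ZFSet.omega_zero, fun u _ hu => ZFSet.notMem_empty u hu⟩, ?_, ?_⟩
  · intro u _ hu z _ hz
    rcases mem_omega_iff.1 hu with ⟨n, rfl⟩
    rcases mem_natZF.1 hz with ⟨m, _, rfl⟩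
    exact natZF_mem_omega m
  · intro y hyH hy
    refine ⟨insert y y, hins y hyH, ZFSet.omega_succ hy, ZFSet.mem_insert y y, ?_, ?_⟩
    · intro u _ hu
      rcases ZFSet.mem_insert_iff.1 hu with rfl | hu
      · exact Or.inr rfl
      · exact Or.inl hu
    · intro u _ hu
      exact ZFSet.mem_insert_of_mem _ hu
  · intro y hyH hy
    rcases mem_omega_iff.1 hy with ⟨n, rfl⟩
    cases n with
    | zero => exact Or.inl fun u _ hu => ZFSet.notMem_empty u hu
    | succ k =>
      refine Or.inr ⟨natZF k, Htr _ hyH _ (ZFSet.mem_insert _ _), ZFSet.mem_insert _ _, ?_, ?_⟩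
      · intro u _ hu
        rcases ZFSet.mem_insert_iff.1 hu with rfl | hu
        · exact Or.inr rfl
        · exact Or.inl hu
      · intro u _ hu
        exact ZFSet.mem_insert_of_mem _ hu

theorem eq_omega_of_realize_fIsOmega {H : Set ZFSet} (Htr : ∀ x ∈ H, ∀ y ∈ x, y ∈ H)
    {w : ZFSet} (hw : w ∈ H) (h : Realize H fIsOmega ![w]) : w = ZFSet.omega := by
  rw [realize_fIsOmega] at h
  obtain ⟨c1, ⟨z0, hz0H, hz0w, hz0e⟩, c3, c4⟩ := h
  have trans_w : ∀ u ∈ w, ∀ z ∈ u, z ∈ w := fun u hu z hz =>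
    c1 u (Htr _ hw _ hu) hu z (Htr _ (Htr _ hw _ hu) _ hz) hz
  have hz0 : z0 = ∅ := by
    rw [ZFSet.eq_empty]
    intro y hy
    exact hz0e y (Htr _ hz0H _ hy) hy
  have hempw : (∅ : ZFSet) ∈ w := hz0 ▸ hz0w
  have hsuccw : ∀ y ∈ w, insert y y ∈ w := by
    intro y hy
    obtain ⟨z, hzH, hzw, hyz, h1, h2⟩ := c3 y (Htr _ hw _ hy) hy
    have : z = insert y y := by
      apply ZFSet.ext; intro u
      rw [ZFSet.mem_insert_iff]
      constructor
      · intro hu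
        rcases h1 u (Htr _ hzH _ hu) hu with hu' | rfl
        · exact Or.inr hu'
        · exact Or.inl rfl
      · rintro (rfl | hu)
        · exact hyz
        · exact h2 u (Htr _ (Htr _ hw _ hy) _ hu) hu
    exact this ▸ hzw
  have sup : ∀ n, natZF n ∈ w := by
    intro n
    induction n with
    | zero => exact hempw
    | succ k ih => exact hsuccw _ ih
  have sub : ∀ y, y ∈ w → ∃ n, y = natZF n := by
    intro y
    induction y using ZFSet.inductionOn with
    | h y IH =>
      intro hyw
      rcases c4 y (Htr _ hw _ hyw) hyw with hy0 | ⟨z, hzH, hzy, h1, h2⟩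
      · refine ⟨0, ?_⟩
        rw [show natZF 0 = (∅ : ZFSet) from rfl, ZFSet.eq_empty]
        intro u hu
        exact hy0 u (Htr _ (Htr _ hw _ hyw) _ hu) hu
      · have hzw : z ∈ w := trans_w y hyw z hzy
        obtain ⟨n, rfl⟩ := IH z hzy hzw
        refine ⟨n + 1, ?_⟩
        show y = insert (natZF n) (natZF n)
        apply ZFSet.ext; intro u
        rw [ZFSet.mem_insert_iff]
        constructor
        · intro hu
          rcases h1 u (Htr _ (Htr _ hw _ hyw) _ hu) hu with hu' | rfl
          · exact Or.inr hu'
          · exact Or.inl rfl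
        · rintro (rfl | hu)
          · exact hzy
          · exact h2 u (Htr _ hzH _ hu) hu
  apply ZFSet.ext; intro u
  constructor
  · intro hu
    rcases sub u hu with ⟨n, rfl⟩
    exact natZF_mem_omega n
  · intro hu
    rcases mem_omega_iff.1 hu with ⟨n, rfl⟩
    exact sup n

/-- Innermost implication of the matrix formula. Context (14 vars):
`[d', u', p', d, u, p, m, n, α, γ, lamp, w, F, x]`. -/
def fDEq : SF 14 := (fPairEq2 2 6 9 0).imp (fIntEq 3 0 13)

/-- Context (11 vars): `[d, u, p, m, n, α, γ, lamp, w, F, x]`. -/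
def fInner : SF 11 := SF.all ((SF.mem 0 10).imp
  (SF.all ((SF.mem 0 1).imp (SF.all ((SF.mem 0 1).imp fDEq)))))

/-- Context (8 vars): `[m, n, α, γ, lamp, w, F, x]` :
`∀ p ∈ F, ∀ u ∈ p, ∀ d ∈ u, p = ⟨⟨m,α⟩,d⟩ → ∀ p' ∈ F, ∀ u' ∈ p', ∀ d' ∈ u',
  p' = ⟨⟨m,γ⟩,d'⟩ → d ∩ x = d' ∩ x`. -/
def fEQ : SF 8 := SF.all ((SF.mem 0 7).imp
  (SF.all ((SF.mem 0 1).imp (SF.all ((SF.mem 0 1).imp ((fPairEq2 2 3 5 0).imp fInner))))))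

def fMBlock : SF 8 := (SF.mem 0 5).imp (((SF.mem 1 0).or (SF.eq 1 0)).imp fEQ)
def fNBlock : SF 7 := (SF.mem 0 4).and (SF.all fMBlock)
def fAlphaBlock : SF 6 := (SF.mem 0 2).imp (((SF.mem 1 0).or (SF.eq 1 0)).imp (.ex fNBlock))
/-- Context: `[γ, lamp, w, F, x]` : `γ ∈ lamp` and for all `α ∈ lamp` with `γ ≤ α`
there is `n ∈ w` such that for all `m ∈ w` with `n ≤ m`, `D m α ∩ x = D m γ ∩ x`. -/
def fGammaBody : SF 5 := (SF.mem 0 1).and (SF.all fAlphaBlock)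
def fGamma : SF 4 := .ex fGammaBody

section Gamma
variable {H : Set ZFSet} (Htr : ∀ x ∈ H, ∀ y ∈ x, y ∈ H)
  (D : ℕ → ZFSet → ZFSet) {lampZ Dz x γ : ZFSet}
  (hγH : γ ∈ H) (hlampH : lampZ ∈ H) (homH : ZFSet.omega ∈ H) (hDzH : Dz ∈ H) (hxH : x ∈ H)
  (hD1 : ∀ (n : ℕ) (α : ZFSet), α ∈ lampZ →
    ZFSet.pair (ZFSet.pair (natZF n) α) (D n α) ∈ Dz)
  (hD2 : ∀ p ∈ Dz, ∃ (n : ℕ) (α : ZFSet), α ∈ lampZ ∧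
    p = ZFSet.pair (ZFSet.pair (natZF n) α) (D n α))

include Htr hlampH homH hDzH hD1 hD2

theorem realize_fEQ {α nn : ZFSet} {j : ℕ} (hαH : α ∈ H) (hα : α ∈ lampZ) (hγ : γ ∈ lampZ) :
    Realize H fEQ
      (Fin.cons (natZF j) (Fin.cons nn (Fin.cons α (Fin.cons γ ![lampZ, ZFSet.omega, Dz, x]))))
      ↔ D j α ∩ x = D j γ ∩ x := by
  have base : Realize H fEQ
      (Fin.cons (natZF j) (Fin.cons nn (Fin.cons α (Fin.cons γ ![lampZ, ZFSet.omega, Dz, x]))))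
      ↔ ∀ p ∈ H, p ∈ Dz → ∀ u ∈ H, u ∈ p → ∀ d ∈ H, d ∈ u →
          Realize H (fPairEq2 2 3 5 0)
            (Fin.cons d (Fin.cons u (Fin.cons p (Fin.cons (natZF j) (Fin.cons nn
              (Fin.cons α (Fin.cons γ ![lampZ, ZFSet.omega, Dz, x]))))))) →
          ∀ p' ∈ H, p' ∈ Dz → ∀ u' ∈ H, u' ∈ p' → ∀ d' ∈ H, d' ∈ u' →
            Realize H (fPairEq2 2 6 9 0)
              (Fin.cons d' (Fin.cons u' (Fin.cons p' (Fin.cons d (Fin.cons u (Fin.cons p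
                (Fin.cons (natZF j) (Fin.cons nn (Fin.cons α
                  (Fin.cons γ ![lampZ, ZFSet.omega, Dz, x])))))))))) →
            Realize H (fIntEq 3 0 13)
              (Fin.cons d' (Fin.cons u' (Fin.cons p' (Fin.cons d (Fin.cons u (Fin.cons p
                (Fin.cons (natZF j) (Fin.cons nn (Fin.cons α
                  (Fin.cons γ ![lampZ, ZFSet.omega, Dz, x])))))))))) := by
    simp only [fEQ, fInner, fDEq, realize_all, realize_imp, realize_mem]
    exact Iff.rfl
  rw [base]; clear base
  constructor
  · intro h
    have hpDz : ZFSet.pair (ZFSet.pair (natZF j) α) (D j α) ∈ Dz := hD1 j α hα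
    have hpH : ZFSet.pair (ZFSet.pair (natZF j) α) (D j α) ∈ H := Htr _ hDzH _ hpDz
    have huP : ({ZFSet.pair (natZF j) α, D j α} : ZFSet) ∈
        ZFSet.pair (ZFSet.pair (natZF j) α) (D j α) := ZFSet.mem_pair.2 (Or.inr rfl)
    have huH := Htr _ hpH _ huP
    have hdU : D j α ∈ ({ZFSet.pair (natZF j) α, D j α} : ZFSet) :=
      ZFSet.mem_pair.2 (Or.inr rfl)
    have hdH := Htr _ huH _ hdU
    have hp'Dz : ZFSet.pair (ZFSet.pair (natZF j) γ) (D j γ) ∈ Dz := hD1 j γ hγ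
    have hp'H : ZFSet.pair (ZFSet.pair (natZF j) γ) (D j γ) ∈ H := Htr _ hDzH _ hp'Dz
    have hu'P : ({ZFSet.pair (natZF j) γ, D j γ} : ZFSet) ∈
        ZFSet.pair (ZFSet.pair (natZF j) γ) (D j γ) := ZFSet.mem_pair.2 (Or.inr rfl)
    have hu'H := Htr _ hp'H _ hu'P
    have hd'U : D j γ ∈ ({ZFSet.pair (natZF j) γ, D j γ} : ZFSet) :=
      ZFSet.mem_pair.2 (Or.inr rfl)
    have hd'H := Htr _ hu'H _ hd'U
    have h2 := h _ hpH hpDz _ huH huP _ hdH hdU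
      ((realize_fPairEq2 (p := (2 : Fin 11)) (a := (3 : Fin 11)) (b := (5 : Fin 11))
        (d := (0 : Fin 11)) Htr hpH).2 rfl)
    have h3 := h2 _ hp'H hp'Dz _ hu'H hu'P _ hd'H hd'U
      ((realize_fPairEq2 (p := (2 : Fin 14)) (a := (6 : Fin 14)) (b := (9 : Fin 14))
        (d := (0 : Fin 14)) Htr hp'H).2 rfl)
    exact (realize_fIntEq (d := (3 : Fin 14)) (d' := (0 : Fin 14)) (x := (13 : Fin 14))
      Htr hdH hd'H).1 h3
  · intro h
    intro p hpH hpDz u huH hup d hdH hdu hre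
    have hpe : p = ZFSet.pair (ZFSet.pair (natZF j) α) d :=
      (realize_fPairEq2 (p := (2 : Fin 11)) (a := (3 : Fin 11)) (b := (5 : Fin 11))
        (d := (0 : Fin 11)) Htr hpH).1 hre
    obtain ⟨k, β, hβ, he⟩ := hD2 p hpDz
    rw [hpe] at he
    obtain ⟨he1, he2⟩ := ZFSet.pair_injective he
    obtain ⟨he3, he4⟩ := ZFSet.pair_injective he1
    have hkj : k = j := natZF_injective he3.symm
    have hd : d = D j α := by rw [he2, hkj, he4]
    intro p' hp'H hp'Dz u' hu'H hu'p d' hd'H hd'u hre'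
    have hpe' : p' = ZFSet.pair (ZFSet.pair (natZF j) γ) d' :=
      (realize_fPairEq2 (p := (2 : Fin 14)) (a := (6 : Fin 14)) (b := (9 : Fin 14))
        (d := (0 : Fin 14)) Htr hp'H).1 hre'
    obtain ⟨k', β', hβ', he'⟩ := hD2 p' hp'Dz
    rw [hpe'] at he'
    obtain ⟨he1', he2'⟩ := ZFSet.pair_injective he'
    obtain ⟨he3', he4'⟩ := ZFSet.pair_injective he1'
    have hkj' : k' = j := natZF_injective he3'.symm
    have hd' : d' = D j γ := by rw [he2', hkj', he4']
    refine (realize_fIntEq (d := (3 : Fin 14)) (d' := (0 : Fin 14)) (x := (13 : Fin 14))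
      Htr hdH hd'H).2 ?_
    show d ∩ x = d' ∩ x
    rw [hd, hd']
    exact h
theorem realize_fGammaBody :
    Realize H fGammaBody (Fin.cons γ ![lampZ, ZFSet.omega, Dz, x]) ↔
      (γ ∈ lampZ ∧ ∀ α, α ∈ lampZ → (γ ∈ α ∨ γ = α) →
        ∃ n : ℕ, ∀ m : ℕ, n ≤ m → D m α ∩ x = D m γ ∩ x) := by
  have base : Realize H fGammaBody (Fin.cons γ ![lampZ, ZFSet.omega, Dz, x]) ↔
      (γ ∈ lampZ ∧ ∀ α ∈ H, α ∈ lampZ → (γ ∈ α ∨ γ = α) →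
        ∃ nn ∈ H, nn ∈ ZFSet.omega ∧ ∀ mm ∈ H, mm ∈ ZFSet.omega → (nn ∈ mm ∨ nn = mm) →
          Realize H fEQ (Fin.cons mm (Fin.cons nn (Fin.cons α
            (Fin.cons γ ![lampZ, ZFSet.omega, Dz, x]))))) := by
    simp only [fGammaBody, fAlphaBlock, fNBlock, fMBlock, realize_and, realize_all,
      realize_imp, realize_or, realize_ex, realize_mem, realize_eq]
    exact Iff.rfl
  rw [base]; clear base
  constructor
  · rintro ⟨hγl, h⟩
    refine ⟨hγl, fun α hαl hole => ?_⟩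
    have hαH : α ∈ H := Htr _ hlampH _ hαl
    obtain ⟨nn, hnnH, hnnom, h2⟩ := h α hαH hαl hole
    obtain ⟨n₀, rfl⟩ := mem_omega_iff.1 hnnom
    refine ⟨n₀, fun j hj => ?_⟩
    have h3 := h2 (natZF j) (Htr _ homH _ (natZF_mem_omega j)) (natZF_mem_omega j)
      (natZF_le_iff.2 hj)
    exact (realize_fEQ Htr D hlampH homH hDzH hD1 hD2 hαH hαl hγl).1 h3
  · rintro ⟨hγl, h⟩
    refine ⟨hγl, fun α hαH hαl hole => ?_⟩
    obtain ⟨n₀, hn₀⟩ := h α hαl hole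
    refine ⟨natZF n₀, Htr _ homH _ (natZF_mem_omega n₀), natZF_mem_omega n₀, ?_⟩
    intro mm hmmH hmmom holem
    obtain ⟨j, rfl⟩ := mem_omega_iff.1 hmmom
    have hj : n₀ ≤ j := natZF_le_iff.1 holem
    exact (realize_fEQ Htr D hlampH homH hDzH hD1 hD2 hαH hαl hγl).2 (hn₀ j hj)
end Gamma

/-- Context `[f, w, x]`: `f` is a "functional" set of pairs. -/
def fFunc : SF 3 := SF.all ((SF.mem 0 1).imp (SF.all ((SF.mem 0 2).imp
  (SF.all ((SF.mem 0 2).imp ((fSing 0).imp ((SF.mem 0 1).imp (SF.eq 2 1))))))))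

/-- Context `[f, w, x]`: every `t ∈ x` is a value of `f` at some `a ∈ w`. -/
def fTotal : SF 3 := SF.all ((SF.mem 0 3).imp (.ex ((SF.mem 0 3).and (fMemPair 2 0 1))))

def fEnumBody : SF 3 := fFunc.and fTotal
def fEnum : SF 2 := .ex fEnumBody

section Enum
universe u
variable {H : Set ZFSet.{u}} (Htr : ∀ x ∈ H, ∀ y ∈ x, y ∈ H) {f x : ZFSet}
  (hfH : f ∈ H) (hxH : x ∈ H) (homH : ZFSet.omega ∈ H)
include Htr hfH

theorem realize_fEnumBody_base :
    Realize H fEnumBody (Fin.cons f ![ZFSet.omega, x]) ↔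
      ((∀ p ∈ H, p ∈ f → ∀ q ∈ H, q ∈ f → ∀ u ∈ H, u ∈ p →
          Realize H (fSing 0)
            (Fin.cons u (Fin.cons q (Fin.cons p (Fin.cons f ![ZFSet.omega, x])))) →
          u ∈ q → p = q) ∧
       (∀ t ∈ H, t ∈ x → ∃ a ∈ H, a ∈ ZFSet.omega ∧
          Realize H (fMemPair 2 0 1)
            (Fin.cons a (Fin.cons t (Fin.cons f ![ZFSet.omega, x]))))) := by
  simp only [fEnumBody, fFunc, fTotal, realize_and, realize_all, realize_imp,
    realize_ex, realize_mem, realize_eq]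
  exact Iff.rfl

include homH in
theorem realize_fEnumBody_intro (g : ℕ → ZFSet) (hg : ∀ n, g n ∈ x)
    (hsur : ∀ t, t ∈ x → ∃ n, g n = t)
    (hf : f = ZFSet.range (fun n : ℕ => ZFSet.pair (natZF n) (g n))) :
    Realize H fEnumBody (Fin.cons f ![ZFSet.omega, x]) := by
  rw [realize_fEnumBody_base Htr hfH]
  constructor
  · intro p hpH hpf q hqH hqf u huH hup hsing huq
    have hp := (ZFSet.mem_range).1 (hf ▸ hpf)
    have hq := (ZFSet.mem_range).1 (hf ▸ hqf)
    obtain ⟨n, rfl⟩ := hp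
    obtain ⟨m, hm⟩ := hq
    obtain ⟨c, hc⟩ := (realize_fSing (u := (0 : Fin 6)) Htr huH).1 hsing
    have hc' : u = ({c} : ZFSet) := hc
    have hnc : natZF n = c := by
      have hnu : natZF n ∈ u := by
        have hup' : u ∈ ZFSet.pair (natZF n) (g n) := hup
        rcases ZFSet.mem_pair.1 hup' with rfl | rfl
        · exact ZFSet.mem_singleton.2 rfl
        · exact ZFSet.mem_pair.2 (Or.inl rfl)
      rw [hc'] at hnu
      exact ZFSet.mem_singleton.1 hnu
    have hmc : natZF m = c := by
      have hmu : natZF m ∈ u := by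
        rw [← hm] at huq
        rcases ZFSet.mem_pair.1 huq with rfl | rfl
        · exact ZFSet.mem_singleton.2 rfl
        · exact ZFSet.mem_pair.2 (Or.inl rfl)
      rw [hc'] at hmu
      exact ZFSet.mem_singleton.1 hmu
    have hnm : n = m := natZF_injective (hnc.trans hmc.symm)
    show ZFSet.pair (natZF n) (g n) = q
    rw [← hm, hnm]
  · intro t htH htx
    obtain ⟨n, hn⟩ := hsur t htx
    refine ⟨natZF n, Htr _ homH _ (natZF_mem_omega n), natZF_mem_omega n, ?_⟩
    refine (realize_fMemPair (F := (2 : Fin 5)) (a := (0 : Fin 5)) (d := (1 : Fin 5))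
      Htr hfH).2 ?_
    show ZFSet.pair (natZF n) t ∈ f
    rw [hf, ← hn]
    exact ZFSet.mem_range.2 ⟨n, rfl⟩

theorem enum_total_of_realize (h : Realize H fEnumBody (Fin.cons f ![ZFSet.omega, x])) :
    ∀ t ∈ H, t ∈ x → ∃ n : ℕ, ZFSet.pair (natZF n) t ∈ f := by
  intro t htH htx
  obtain ⟨a, haH, haom, hmp⟩ := ((realize_fEnumBody_base Htr hfH).1 h).2 t htH htx
  obtain ⟨n, rfl⟩ := mem_omega_iff.1 haom
  exact ⟨n, (realize_fMemPair (F := (2 : Fin 5)) (a := (0 : Fin 5)) (d := (1 : Fin 5))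
    Htr hfH).1 hmp⟩

theorem enum_func_of_realize (h : Realize H fEnumBody (Fin.cons f ![ZFSet.omega, x])) :
    ∀ (n : ℕ) (t t' : ZFSet), ZFSet.pair (natZF n) t ∈ f →
      ZFSet.pair (natZF n) t' ∈ f → t = t' := by
  intro n t t' ht ht'
  have hfunc := ((realize_fEnumBody_base Htr hfH).1 h).1
  have hpH : ZFSet.pair (natZF n) t ∈ H := Htr _ hfH _ ht
  have hqH : ZFSet.pair (natZF n) t' ∈ H := Htr _ hfH _ ht'
  have hup : ({natZF n} : ZFSet) ∈ ZFSet.pair (natZF n) t := ZFSet.mem_pair.2 (Or.inl rfl)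
  have huH : ({natZF n} : ZFSet) ∈ H := Htr _ hpH _ hup
  have hsing : Realize H (fSing 0) (Fin.cons ({natZF n} : ZFSet)
      (Fin.cons (ZFSet.pair (natZF n) t') (Fin.cons (ZFSet.pair (natZF n) t)
        (Fin.cons f ![ZFSet.omega, x])))) :=
    (realize_fSing (u := (0 : Fin 6)) Htr huH).2 ⟨natZF n, rfl⟩
  have huq : ({natZF n} : ZFSet) ∈ ZFSet.pair (natZF n) t' := ZFSet.mem_pair.2 (Or.inl rfl)
  have hpq := hfunc _ hpH ht _ hqH ht' _ huH hup hsing huq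
  exact (ZFSet.pair_injective hpq).2
end Enum

theorem vmem0 {M : Set ZFSet} : ∀ i : Fin 0, (![] : Fin 0 → ZFSet) i ∈ M :=
  fun i => absurd i.2 (Nat.not_lt_zero i.1)
theorem vmem1 {M : Set ZFSet} {a : ZFSet} (ha : a ∈ M) : ∀ i : Fin 1, ![a] i ∈ M :=
  fun i => Fin.cases ha vmem0 i
theorem vmem2 {M : Set ZFSet} {a b : ZFSet} (ha : a ∈ M) (hb : b ∈ M) :
    ∀ i : Fin 2, ![a, b] i ∈ M := fun i => Fin.cases ha (vmem1 hb) i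
theorem vmem3 {M : Set ZFSet} {a b c : ZFSet} (ha : a ∈ M) (hb : b ∈ M) (hc : c ∈ M) :
    ∀ i : Fin 3, ![a, b, c] i ∈ M := fun i => Fin.cases ha (vmem2 hb hc) i
theorem vmem4 {M : Set ZFSet} {a b c d : ZFSet} (ha : a ∈ M) (hb : b ∈ M) (hc : c ∈ M)
    (hd : d ∈ M) : ∀ i : Fin 4, ![a, b, c, d] i ∈ M := fun i => Fin.cases ha (vmem3 hb hc hd) i

end Aux

set_option maxHeartbeats 2000000 in
/-- Lemma 7.8: for an `ℵ₁`-internally unbounded `M ≺ H_θ` of size `ℵ₁` containing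
a strong covering matrix `𝒟` on `λ⁺`, there is `n < ω` with
`D(m, sup(M ∩ λ⁺)) ∩ x ∈ M` for all countable `x ∈ M`, `x ⊆ λ⁺` and all `m ≥ n`. -/
theorem covering_matrix_guessed (lam lamp : ZFSet)
    (hlam : IsCard lam) (homega : ZFSet.omega ∈ lam)
    (hcof : ∃ s : Set ZFSet, CofinalSetIn s lam ∧ s.Countable)
    (hlamp : IsCard lamp) (hlt : lam ∈ lamp)
    (hsucc : ∀ μ : ZFSet, IsCard μ → lam ∈ μ → ole lamp μ)
    (D : ℕ → ZFSet → ZFSet) (hD : SCM lam lamp D)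
    (θ : ZFSet) (hθ : IsRegCard θ) (hlampθ : ZFSet.powerset lamp ∈ HSet θ)
    (M : Set ZFSet) (hM : Prec M (HSet θ))
    (hMsize : Cardinal.mk M = Cardinal.aleph 1) (hIU : IntUnb M)
    (hlampM : lamp ∈ M)
    (Dz : ZFSet) (hDzM : Dz ∈ M)
    (hDz : (∀ (n : ℕ) (α : ZFSet), α ∈ lamp →
        ZFSet.pair (ZFSet.pair (natZF n) α) (D n α) ∈ Dz) ∧
      ∀ p, p ∈ Dz → ∃ (n : ℕ) (α : ZFSet), α ∈ lamp ∧
        p = ZFSet.pair (ZFSet.pair (natZF n) α) (D n α))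
    (σ : ZFSet) (hσord : IsOrd σ) (hσ : σ ∈ lamp)
    (hσub : ∀ x, x ∈ M → x ∈ lamp → ole x σ)
    (hσlub : ∀ τ : ZFSet, IsOrd τ → (∀ x, x ∈ M → x ∈ lamp → ole x τ) → ole σ τ) :
    ∃ n : ℕ, ∀ x : ZFSet, x ∈ M → x ⊆ lamp → card x ≤ ℵ₀ →
      ∀ m : ℕ, n ≤ m → (D m σ ∩ x) ∈ M := by
  classical
  have Htr : ∀ x ∈ HSet θ, ∀ y ∈ x, y ∈ HSet θ := fun x hx y hy => HSet_trans hx hy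
  have hMH : M ⊆ HSet θ := hM.1
  -- basic cardinality facts about θ
  have hθinf : ℵ₀ < card θ := by
    refine lt_of_le_of_lt (aleph0_le_mk_of_natZF (s := tcl (ZFSet.powerset lamp))
      (fun n => ?_)) hlampθ
    exact Relation.TransGen.head (natZF_mem_omega n) (Relation.TransGen.head homega
      (Relation.TransGen.head hlt (Relation.TransGen.single
        (ZFSet.mem_powerset.2 (fun z hz => hz)))))
  have hθale : ℵ₀ ≤ card θ := hθinf.le
  have homH : ZFSet.omega ∈ HSet θ := HSet_omega hθinf
  have hnumH : ∀ n, natZF n ∈ HSet θ := fun n => Htr _ homH _ (natZF_mem_omega n)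
  have hempH : (∅ : ZFSet) ∈ HSet θ := HSet_empty hθale
  have hlampHθ : lamp ∈ HSet θ := hMH hlampM
  have hDzHθ : Dz ∈ HSet θ := hMH hDzM
  -- the existential transfer principle
  have hexM : ∀ {n : ℕ} (φ : SF (n+1)) (v : Fin n → ZFSet), (∀ i, v i ∈ M) →
      Realize (HSet θ) (.ex φ) v → ∃ w ∈ M, Realize (HSet θ) φ (Fin.cons w v) := by
    intro n φ v hv hreal
    have h1 : Realize M (.ex φ) v := (hM.2 (.ex φ) v hv).2 hreal
    obtain ⟨w, hwM, hw⟩ := h1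
    have hv' : ∀ i, (Fin.cons w v : Fin (n+1) → ZFSet) i ∈ M :=
      fun i => Fin.cases (motive := fun i => (Fin.cons w v : Fin (n+1) → ZFSet) i ∈ M) hwM hv i
    exact ⟨w, hwM, (hM.2 φ (Fin.cons w v) hv').1 hw⟩
  -- ∅ ∈ M
  have hemptyM : (∅ : ZFSet) ∈ M := by
    have hreal : Realize (HSet θ) fEmptySet ![] := by
      refine ⟨∅, hempH, realize_all.2 fun u hu => realize_not.2 fun hmem => ?_⟩
      exact ZFSet.notMem_empty u hmem
    obtain ⟨w, hwM, hw⟩ := hexM _ ![] vmem0 hreal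
    have hwe : w = ∅ := by
      rw [ZFSet.eq_empty]
      intro y hy
      exact realize_not.1 (realize_all.1 hw y (Htr _ (hMH hwM) _ hy)) hy
    exact hwe ▸ hwM
  -- numerals are in M
  have hnatM : ∀ n : ℕ, natZF n ∈ M := by
    intro n
    induction n with
    | zero => exact hemptyM
    | succ k ih =>
      have hreal : Realize (HSet θ) fSucc ![natZF k] := by
        refine ⟨insert (natZF k) (natZF k), HSet_insert hθale (hnumH k) (hnumH k), ?_⟩
        refine realize_and.2 ⟨ZFSet.mem_insert _ _, realize_and.2 ⟨?_, ?_⟩⟩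
        · refine realize_all.2 fun u hu => realize_imp.2 fun hmem => realize_or.2 ?_
          have hmem' : u ∈ insert (natZF k) (natZF k) := hmem
          rcases ZFSet.mem_insert_iff.1 hmem' with rfl | h
          · exact Or.inr (realize_eq.2 rfl)
          · exact Or.inl h
        · refine realize_all.2 fun u hu => realize_imp.2 fun hmem => ?_
          exact ZFSet.mem_insert_of_mem _ hmem
      obtain ⟨z, hzM, hz⟩ := hexM _ ![natZF k] (vmem1 ih) hreal
      obtain ⟨h1, h2, h3⟩ := realize_and.1 hz |>.imp id (realize_and.1)
      have h1' : natZF k ∈ z := h1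
      have hze : z = insert (natZF k) (natZF k) := by
        apply ZFSet.ext; intro u
        rw [ZFSet.mem_insert_iff]
        constructor
        · intro hu
          rcases realize_or.1 (realize_imp.1 (realize_all.1 h2 u (Htr _ (hMH hzM) _ hu)) hu)
            with h | h
          · exact Or.inr h
          · exact Or.inl (realize_eq.1 h)
        · rintro (rfl | hu)
          · exact h1'
          · exact realize_imp.1 (realize_all.1 h3 u (Htr _ (hnumH k) _ hu)) hu
      have hz' : z = natZF (k+1) := hze
      exact hz' ▸ hzM
  -- ω ∈ M
  have homegaM : ZFSet.omega ∈ M := by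
    have hreal : Realize (HSet θ) (SF.ex fIsOmega) ![] :=
      ⟨ZFSet.omega, homH, realize_fIsOmega_omega Htr homH hempH
        (fun a ha => HSet_insert hθale ha ha)⟩
    obtain ⟨w, hwM, hw⟩ := hexM _ ![] vmem0 hreal
    have hwe : w = ZFSet.omega := eq_omega_of_realize_fIsOmega Htr (hMH hwM) hw
    exact hwe ▸ hwM
  -- M is closed under intersections
  have hintM : ∀ d xx : ZFSet, d ∈ M → xx ∈ M → d ∩ xx ∈ M := by
    intro d xx hdM hxxM
    have hreal : Realize (HSet θ) fInterF ![d, xx] := by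
      refine ⟨d ∩ xx, HSet_subset (hMH hdM) (fun z hz => (ZFSet.mem_inter.1 hz).1), ?_⟩
      refine realize_and.2 ⟨?_, ?_⟩
      · refine realize_all.2 fun t ht => realize_imp.2 fun hmem => realize_and.2 ?_
        have hmem' : t ∈ d ∩ xx := hmem
        exact ⟨(ZFSet.mem_inter.1 hmem').1, (ZFSet.mem_inter.1 hmem').2⟩
      · refine realize_all.2 fun t ht => realize_imp.2 fun h1 => realize_imp.2 fun h2 => ?_
        exact ZFSet.mem_inter.2 ⟨h1, h2⟩
    obtain ⟨e, heM, he⟩ := hexM _ ![d, xx] (vmem2 hdM hxxM) hreal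
    obtain ⟨h1, h2⟩ := realize_and.1 he
    have hee : e = d ∩ xx := by
      apply ZFSet.ext; intro z
      constructor
      · intro hz
        have := realize_and.1 (realize_imp.1 (realize_all.1 h1 z (Htr _ (hMH heM) _ hz)) hz)
        exact ZFSet.mem_inter.2 ⟨this.1, this.2⟩
      · intro hz
        rcases ZFSet.mem_inter.1 hz with ⟨hz1, hz2⟩
        exact realize_imp.1 (realize_imp.1
          (realize_all.1 h2 z (Htr _ (hMH hdM) _ hz1)) hz1) hz2
    exact hee ▸ heM
  -- D m γ ∈ M for γ ∈ M ∩ lamp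
  have hgetD : ∀ (m : ℕ) (γ : ZFSet), γ ∈ M → γ ∈ lamp → D m γ ∈ M := by
    intro m γ hγM hγl
    have hpDz := hDz.1 m γ hγl
    have hpH : ZFSet.pair (ZFSet.pair (natZF m) γ) (D m γ) ∈ HSet θ := Htr _ hDzHθ _ hpDz
    have huP : ({ZFSet.pair (natZF m) γ, D m γ} : ZFSet) ∈
        ZFSet.pair (ZFSet.pair (natZF m) γ) (D m γ) := ZFSet.mem_pair.2 (Or.inr rfl)
    have hdH : D m γ ∈ HSet θ :=
      Htr _ (Htr _ hpH _ huP) _ (ZFSet.mem_pair.2 (Or.inr rfl))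
    have hreal : Realize (HSet θ) fGetD ![natZF m, γ, Dz] := by
      refine ⟨D m γ, hdH, ?_⟩
      exact (realize_fMemPair2 (F := (3 : Fin 4)) (a := (1 : Fin 4)) (b := (2 : Fin 4))
        (d := (0 : Fin 4)) Htr hDzHθ).2 hpDz
    obtain ⟨d, hdM, hd⟩ := hexM _ ![natZF m, γ, Dz] (vmem3 (hnatM m) hγM hDzM) hreal
    have hp : ZFSet.pair (ZFSet.pair (natZF m) γ) d ∈ Dz :=
      (realize_fMemPair2 (F := (3 : Fin 4)) (a := (1 : Fin 4)) (b := (2 : Fin 4))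
        (d := (0 : Fin 4)) Htr hDzHθ).1 hd
    obtain ⟨k, β, hβ, he⟩ := hDz.2 _ hp
    obtain ⟨he1, he2⟩ := ZFSet.pair_injective he
    obtain ⟨he3, he4⟩ := ZFSet.pair_injective he1
    have hkm : k = m := (natZF_injective he3).symm
    have hβγ : β = γ := he4.symm
    have hde : d = D m γ := by rw [he2, hkm, hβγ]
    exact hde ▸ hdM
  -- countable elements of M are subsets of M
  have hctbl : ∀ x₀, x₀ ∈ M → card x₀ ≤ ℵ₀ → ∀ t, t ∈ x₀ → t ∈ M := by
    intro x₀ hx₀M hx₀c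
    rcases ZFSet.eq_empty_or_nonempty x₀ with rfl | ⟨t₀, ht₀⟩
    · intro t ht; exact absurd ht (ZFSet.notMem_empty t)
    have hc : x₀.toSet.Countable := by
      rw [← Set.countable_coe_iff]
      exact Cardinal.mk_le_aleph0_iff.1 hx₀c
    obtain ⟨g, hg⟩ := Set.Countable.exists_eq_range hc ⟨t₀, Iff.rfl.2 ht₀⟩
    have hgx : ∀ n, g n ∈ x₀ := by
      intro n
      have : g n ∈ x₀.toSet := hg ▸ Set.mem_range_self n
      exact Iff.rfl.1 this
    have hsur : ∀ t, t ∈ x₀ → ∃ n, g n = t := by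
      intro t ht
      have : t ∈ Set.range g := hg ▸ Iff.rfl.2 ht
      exact this
    set f : ZFSet := ZFSet.range (fun n : ℕ => ZFSet.pair (natZF n) (g n)) with hfdef
    have homct : Cardinal.mk ZFSet.omega.toSet ≤ ℵ₀ := by
      have hss : ZFSet.omega.toSet ⊆ Set.range natZF := by
        intro y hy
        rcases mem_omega_iff.1 (Iff.rfl.1 hy) with ⟨n, rfl⟩
        exact ⟨n, rfl⟩
      exact le_trans (Cardinal.mk_le_mk_of_subset hss) (Set.countable_range natZF).le_aleph0
    have hfH : f ∈ HSet θ := by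
      have hsub : tcl f ⊆ (Set.range (fun n : ℕ => ZFSet.pair (natZF n) (g n))) ∪
          ((Set.range (fun n : ℕ => ({natZF n} : ZFSet))) ∪
           ((Set.range (fun n : ℕ => ({natZF n, g n} : ZFSet))) ∪
            (ZFSet.omega.toSet ∪ tcl x₀))) := by
        refine tcl_subset_of ?_ ?_
        · intro y hy
          exact Or.inl (ZFSet.mem_range.1 hy)
        · rintro u (⟨n, rfl⟩ | ⟨n, rfl⟩ | ⟨n, rfl⟩ | hu | hu) z hz
          · rcases ZFSet.mem_pair.1 hz with rfl | rfl
            · exact Or.inr (Or.inl ⟨n, rfl⟩)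
            · exact Or.inr (Or.inr (Or.inl ⟨n, rfl⟩))
          · have : z = natZF n := ZFSet.mem_singleton.1 hz
            exact Or.inr (Or.inr (Or.inr (Or.inl
              (Iff.rfl.2 (this ▸ natZF_mem_omega n)))))
          · rcases ZFSet.mem_pair.1 hz with rfl | rfl
            · exact Or.inr (Or.inr (Or.inr (Or.inl
                (Iff.rfl.2 (natZF_mem_omega n)))))
            · exact Or.inr (Or.inr (Or.inr (Or.inr (Relation.TransGen.single (hgx n)))))
          · rcases mem_omega_iff.1 (Iff.rfl.1 hu) with ⟨k, rfl⟩
            rcases mem_natZF.1 hz with ⟨j, _, rfl⟩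
            exact Or.inr (Or.inr (Or.inr (Or.inl
              (Iff.rfl.2 (natZF_mem_omega j)))))
          · exact Or.inr (Or.inr (Or.inr (Or.inr (tcl_closed hu hz))))
      refine lt_of_le_of_lt (Cardinal.mk_le_mk_of_subset hsub) ?_
      refine lt_of_le_of_lt (Cardinal.mk_union_le _ _) (Cardinal.add_lt_of_lt hθale
        (lt_of_le_of_lt (Set.countable_range _).le_aleph0 hθinf) ?_)
      refine lt_of_le_of_lt (Cardinal.mk_union_le _ _) (Cardinal.add_lt_of_lt hθale
        (lt_of_le_of_lt (Set.countable_range _).le_aleph0 hθinf) ?_)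
      refine lt_of_le_of_lt (Cardinal.mk_union_le _ _) (Cardinal.add_lt_of_lt hθale
        (lt_of_le_of_lt (Set.countable_range _).le_aleph0 hθinf) ?_)
      refine lt_of_le_of_lt (Cardinal.mk_union_le _ _) (Cardinal.add_lt_of_lt hθale
        (lt_of_le_of_lt homct hθinf) ?_)
      exact hMH hx₀M
    have hreal : Realize (HSet θ) fEnum ![ZFSet.omega, x₀] :=
      ⟨f, hfH, realize_fEnumBody_intro Htr hfH homH g hgx hsur hfdef⟩
    obtain ⟨f', hf'M, hf'⟩ := hexM _ ![ZFSet.omega, x₀] (vmem2 homegaM hx₀M) hreal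
    have htot := enum_total_of_realize Htr (hMH hf'M) hf'
    have hfun := enum_func_of_realize Htr (hMH hf'M) hf'
    intro t ht0
    have htH : t ∈ HSet θ := Htr _ (hMH hx₀M) _ ht0
    obtain ⟨n, hpt⟩ := htot t htH ht0
    have hvreal : Realize (HSet θ) fVal ![f', natZF n] :=
      ⟨t, htH, (realize_fMemPair (F := (1 : Fin 3)) (a := (2 : Fin 3)) (d := (0 : Fin 3))
        Htr (hMH hf'M)).2 hpt⟩
    obtain ⟨t', ht'M, ht'⟩ := hexM _ ![f', natZF n] (vmem2 hf'M (hnatM n)) hvreal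
    have hpt' : ZFSet.pair (natZF n) t' ∈ f' :=
      (realize_fMemPair (F := (1 : Fin 3)) (a := (2 : Fin 3)) (d := (0 : Fin 3))
        Htr (hMH hf'M)).1 ht'
    have : t' = t := hfun n t' t hpt' hpt
    exact this ▸ ht'M
  -- the key γ-extraction
  have hgamma : ∀ x₀ : ZFSet, x₀ ∈ M → x₀ ⊆ lamp → card x₀ ≤ ℵ₀ →
      ∃ γ' ∈ M, γ' ∈ lamp ∧ ∀ α, α ∈ lamp → (γ' ∈ α ∨ γ' = α) →
        ∃ n : ℕ, ∀ m : ℕ, n ≤ m → D m α ∩ x₀ = D m γ' ∩ x₀ := by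
    intro x₀ hx₀M hx₀l hx₀c
    obtain ⟨γ₀, hγ₀l, hγ₀⟩ := hD.2.2.2.1 x₀ hx₀l hx₀c
    have hreal : Realize (HSet θ) fGamma ![lamp, ZFSet.omega, Dz, x₀] := by
      refine ⟨γ₀, Htr _ hlampHθ _ hγ₀l, ?_⟩
      refine (realize_fGammaBody Htr D hlampHθ homH hDzHθ hDz.1 hDz.2).2 ⟨hγ₀l, ?_⟩
      intro α hαl hole
      exact hγ₀ α hαl hole
    obtain ⟨γ', hγ'M, hγ'⟩ := hexM fGammaBody ![lamp, ZFSet.omega, Dz, x₀]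
      (vmem4 hlampM homegaM hDzM hx₀M) hreal
    have hout := (realize_fGammaBody Htr D hlampHθ homH hDzHθ hDz.1 hDz.2).1 hγ'
    exact ⟨γ', hγ'M, hout.1, hout.2⟩
  -- main argument, by contradiction
  by_contra hcon
  push_neg at hcon
  choose xs hxsM hxsl hxsc ms hms hbad using hcon
  have hAsub : (⋃ n, (xs n).toSet) ⊆ M := by
    refine Set.iUnion_subset fun n t ht => ?_
    exact hctbl _ (hxsM n) (hxsc n) t (Iff.rfl.1 ht)
  have hAc : (⋃ n, (xs n).toSet).Countable := by
    refine Set.countable_iUnion fun n => ?_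
    rw [← Set.countable_coe_iff]
    exact Cardinal.mk_le_aleph0_iff.1 (hxsc n)
  obtain ⟨z, hzM, hzc, hzsub⟩ := hIU _ hAsub hAc
  have hx₀M : z ∩ lamp ∈ M := hintM z lamp hzM hlampM
  have hx₀l : z ∩ lamp ⊆ lamp := fun t ht => (ZFSet.mem_inter.1 ht).2
  have hx₀c : card (z ∩ lamp) ≤ ℵ₀ := by
    refine le_trans (Cardinal.mk_le_mk_of_subset (fun t ht => ?_)) hzc
    exact Iff.rfl.2 (ZFSet.mem_inter.1 (Iff.rfl.1 ht)).1
  have hsubx : ∀ n, ∀ t, t ∈ xs n → t ∈ z ∩ lamp := by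
    intro n t ht
    refine ZFSet.mem_inter.2 ⟨?_, hxsl n ht⟩
    exact Iff.rfl.1 (hzsub (Set.mem_iUnion.2 ⟨n, Iff.rfl.2 ht⟩))
  obtain ⟨γ', hγ'M, hγ'l, hγ'p⟩ := hgamma (z ∩ lamp) hx₀M hx₀l hx₀c
  have hole : γ' ∈ σ ∨ γ' = σ := hσub γ' hγ'M hγ'l
  obtain ⟨k, hk⟩ := hγ'p σ hσ hole
  have heq : D (ms k) σ ∩ (z ∩ lamp) = D (ms k) γ' ∩ (z ∩ lamp) := hk (ms k) (hms k)
  have heq2 : D (ms k) σ ∩ xs k = D (ms k) γ' ∩ xs k := by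
    apply ZFSet.ext; intro t
    simp only [ZFSet.mem_inter]
    constructor
    · rintro ⟨h1, h2⟩
      have : t ∈ D (ms k) γ' ∩ (z ∩ lamp) := heq ▸ ZFSet.mem_inter.2 ⟨h1, hsubx k t h2⟩
      exact ⟨(ZFSet.mem_inter.1 this).1, h2⟩
    · rintro ⟨h1, h2⟩
      have : t ∈ D (ms k) σ ∩ (z ∩ lamp) := heq.symm ▸ ZFSet.mem_inter.2 ⟨h1, hsubx k t h2⟩
      exact ⟨(ZFSet.mem_inter.1 this).1, h2⟩
  have hDγ : D (ms k) γ' ∩ xs k ∈ M := hintM _ _ (hgetD (ms k) γ' hγ'M hγ'l) (hxsM k)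
  exact hbad k (heq2 ▸ hDγ)


end GuessingModels
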